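/- Let j and k be integers with j ≥ 1 and k ≥ 3. Then N(j,k;j,1,1,1) = 2^{(k−3)(j−1)} · N(1,k;1,1,1,1). -/
import Mathlib


open Finset

/-- The Mixed Generalized Gaussian Number `N(α,β;k₀,k₁,k₂,k₃)`. -/
def MGN (a b k₀ k₁ k₂ k₃ : ℕ) : ℚ :=
  ((∏ i ∈ range k₀, ((2 ^ a - 2 ^ i : ℚ) * 2 ^ b)) *
   (∏ i ∈ range k₁, ((8 ^ b - 4 ^ b * 2 ^ i : ℚ) * 2 ^ a)) *
   (∏ i ∈ range k₂, ((4 ^ b - 2 ^ (b + k₁ + i) : ℚ) * 2 ^ a)) *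
   (∏ i ∈ range k₃, (2 ^ b - 2 ^ (k₁ + k₂ + i) : ℚ))) /
  ((∏ i ∈ range k₀, (2 ^ (k₀ + k₁ + k₂ + k₃) - 2 ^ (k₁ + k₂ + k₃ + i) : ℚ)) *
   (∏ i ∈ range k₁, ((8 ^ k₁ - 4 ^ k₁ * 2 ^ i : ℚ) * 2 ^ (k₀ + 2 * k₂ + k₃))) *
   (∏ i ∈ range k₂, ((4 ^ k₂ - 2 ^ (k₂ + i) : ℚ) * 2 ^ (k₀ + 2 * k₁ + k₃))) *
   (∏ i ∈ range k₃, (2 ^ (k₁ + k₂ + k₃) - 2 ^ (k₁ + k₂ + i) : ℚ)))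

/-- `N(j,k;j,1,1,1) = 2^((k-3)(j-1))·N(1,k;1,1,1,1)` for `j ≥ 1` and `k ≥ 3`. -/
theorem MGN_scaling (j k : ℕ) (hj : 1 ≤ j) (hk : 3 ≤ k) :
    MGN j k j 1 1 1 = 2 ^ ((k - 3) * (j - 1)) * MGN 1 k 1 1 1 1 := by
  have hP : (∏ i ∈ range j, ((2:ℚ) ^ j - 2 ^ i)) ≠ 0 := by
    refine prod_ne_zero_iff.2 fun i hi => sub_ne_zero.2 (ne_of_gt ?_)
    exact pow_lt_pow_right₀ one_lt_two (mem_range.1 hi)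
  have h1 : (∏ i ∈ range j, ((2 ^ j - 2 ^ i : ℚ) * 2 ^ k))
      = (∏ i ∈ range j, ((2:ℚ) ^ j - 2 ^ i)) * 2 ^ (k * j) := by
    rw [prod_mul_distrib, prod_const, card_range, ← pow_mul]
  have h2 : (∏ i ∈ range j, ((2:ℚ) ^ (j + 1 + 1 + 1) - 2 ^ (1 + 1 + 1 + i)))
      = 2 ^ (3 * j) * ∏ i ∈ range j, ((2:ℚ) ^ j - 2 ^ i) := by
    have : ∀ i ∈ range j, ((2:ℚ) ^ (j + 1 + 1 + 1) - 2 ^ (1 + 1 + 1 + i))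
        = (2:ℚ)^3 * (2 ^ j - 2 ^ i) := fun i hi => by ring
    rw [prod_congr rfl this, prod_mul_distrib, prod_const, card_range, ← pow_mul]
  obtain ⟨c, rfl⟩ : ∃ c, k = c + 3 := ⟨k - 3, by omega⟩
  obtain ⟨d, rfl⟩ : ∃ d, j = d + 1 := ⟨j - 1, by omega⟩
  unfold MGN
  simp only [prod_range_one] at *
  rw [show d + 1 + 1 + 1 + 1 = d + 1 + 1 + 1 + 1 from rfl] at h2
  rw [show (c + 3 - 3) = c from by omega, show (d + 1 - 1) = d from by omega]
  rw [h1]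
  rw [show (∏ i ∈ range (d+1), ((2:ℚ) ^ (d + 1 + (1 + 1 + 1)) - 2 ^ (1 + 1 + 1 + i)))
      = (∏ i ∈ range (d+1), ((2:ℚ) ^ (d + 1 + 1 + 1 + 1) - 2 ^ (1 + 1 + 1 + i))) from by
    refine prod_congr rfl fun i hi => by ring_nf]
  rw [h2]
  field_simp
  ring
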